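/- Let A be a unital complex Banach algebra in which the set of invertible elements is dense, and let n be a positive natural number. Then the set of invertible elements of the matrix algebra Mₙ(A) of n×n matrices over A is dense in Mₙ(A) (with respect to the topology of entrywise convergence, equivalently with respect to any Banach algebra norm on Mₙ(A), such as the ℓ∞-operator norm). -/

import Mathlib

open Matrix Set

/-- Noncommutative version of `Matrix.isUnit_fromBlocks_zero₂₁`. -/
lemma my_isUnit_fromBlocks_zero21 {A : Type*} [Ring A] {m n : Type*} [Fintype m] [Fintype n]
    [DecidableEq m] [DecidableEq n] {a : Matrix m m A} {b : Matrix m n A} {d : Matrix n n A}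
    (ha : IsUnit a) (hd : IsUnit d) : IsUnit (Matrix.fromBlocks a b 0 d) := by
  obtain ⟨⟨a, a', haa', ha'a⟩, rfl⟩ := ha
  obtain ⟨⟨d, d', hdd', hd'd⟩, rfl⟩ := hd
  simp only [Units.val_mk] at *
  refine ⟨⟨Matrix.fromBlocks a b 0 d,
    Matrix.fromBlocks a' (-(a' * b * d')) 0 d', ?_, ?_⟩, rfl⟩
  · simp only [Matrix.fromBlocks_multiply, Matrix.mul_zero, Matrix.zero_mul, add_zero, zero_add,
      Matrix.mul_neg, ← Matrix.mul_assoc, haa', hdd', Matrix.one_mul, neg_add_cancel, neg_zero,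
      Matrix.fromBlocks_one]
  · simp only [Matrix.fromBlocks_multiply, Matrix.mul_zero, Matrix.zero_mul, add_zero, zero_add,
      Matrix.neg_mul, Matrix.mul_assoc, ha'a, hd'd, Matrix.mul_one, Matrix.one_mul,
      add_neg_cancel, neg_zero, Matrix.fromBlocks_one]

/-- Noncommutative version of `Matrix.isUnit_fromBlocks_zero₁₂`. -/
lemma my_isUnit_fromBlocks_zero12 {A : Type*} [Ring A] {m n : Type*} [Fintype m] [Fintype n]
    [DecidableEq m] [DecidableEq n] {a : Matrix m m A} {c : Matrix n m A} {d : Matrix n n A}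
    (ha : IsUnit a) (hd : IsUnit d) : IsUnit (Matrix.fromBlocks a 0 c d) := by
  obtain ⟨⟨a, a', haa', ha'a⟩, rfl⟩ := ha
  obtain ⟨⟨d, d', hdd', hd'd⟩, rfl⟩ := hd
  simp only [Units.val_mk] at *
  refine ⟨⟨Matrix.fromBlocks a 0 c d,
    Matrix.fromBlocks a' 0 (-(d' * c * a')) d', ?_, ?_⟩, rfl⟩
  · simp only [Matrix.fromBlocks_multiply, Matrix.mul_zero, Matrix.zero_mul, add_zero, zero_add,
      Matrix.mul_neg, ← Matrix.mul_assoc, haa', hdd', Matrix.one_mul, add_neg_cancel, neg_zero,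
      Matrix.fromBlocks_one]
  · simp only [Matrix.fromBlocks_multiply, Matrix.mul_zero, Matrix.zero_mul, add_zero, zero_add,
      Matrix.neg_mul, Matrix.mul_assoc, ha'a, hd'd, Matrix.mul_one, Matrix.one_mul,
      neg_add_cancel, neg_zero, Matrix.fromBlocks_one]

/-- Inductive step: if units are dense in `A` and in `Matrix m m A`, they are dense in
matrices indexed by `Fin 1 ⊕ m`. -/
lemma my_dense_step {A : Type*} [NormedRing A] (h : Dense {a : A | IsUnit a})
    {m : Type*} [Fintype m] [DecidableEq m]
    (hm : Dense {M : Matrix m m A | IsUnit M}) :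
    Dense {M : Matrix (Fin 1 ⊕ m) (Fin 1 ⊕ m) A | IsUnit M} := by
  set T := {M : Matrix (Fin 1 ⊕ m) (Fin 1 ⊕ m) A | IsUnit M} with hT
  -- Step 1: any block matrix with invertible (1,1) corner lies in the closure of the units.
  have key : ∀ (a : Matrix (Fin 1) (Fin 1) A), IsUnit a →
      ∀ (b : Matrix (Fin 1) m A) (c : Matrix m (Fin 1) A) (d : Matrix m m A),
      Matrix.fromBlocks a b c d ∈ closure T := by
    rintro a ha b c d
    obtain ⟨⟨a, a', haa', ha'a⟩, rfl⟩ := ha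
    simp only [Units.val_mk] at *
    have hcont : Continuous (fun d' : Matrix m m A =>
        Matrix.fromBlocks 1 0 (c * a') 1 * Matrix.fromBlocks a b 0 d') := by
      refine Continuous.matrix_mul continuous_const ?_
      apply continuous_matrix
      rintro (i | i) (j | j)
      · exact continuous_const
      · exact continuous_const
      · exact continuous_const
      · simpa only [Matrix.fromBlocks_apply₂₂] using continuous_id'.matrix_elem i j
    have hmaps : Set.MapsTo (fun d' : Matrix m m A =>
        Matrix.fromBlocks 1 0 (c * a') 1 * Matrix.fromBlocks a b 0 d')
        {M : Matrix m m A | IsUnit M} T := by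
      intro d' hd'
      have h1 : IsUnit (Matrix.fromBlocks (1 : Matrix (Fin 1) (Fin 1) A) 0 (c * a') 1) :=
        my_isUnit_fromBlocks_zero12 isUnit_one isUnit_one
      have h2 : IsUnit (Matrix.fromBlocks a b 0 d') :=
        my_isUnit_fromBlocks_zero21 ⟨⟨a, a', haa', ha'a⟩, rfl⟩ hd'
      exact h1.mul h2
    have h5 := hmaps.closure hcont
    rw [hm.closure_eq] at h5
    have h6 := h5 (Set.mem_univ (d - c * a' * b))
    have hadd : ∀ x y : Matrix m m A, x + (y - x) = y := fun x y => by abel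
    have heq : Matrix.fromBlocks 1 0 (c * a') 1 *
        Matrix.fromBlocks a b 0 (d - c * a' * b) = Matrix.fromBlocks a b c d := by
      simp only [Matrix.fromBlocks_multiply, Matrix.one_mul, Matrix.mul_zero, Matrix.zero_mul,
        add_zero, zero_add, Matrix.mul_assoc, ha'a, Matrix.mul_one, hadd]
    exact heq ▸ h6
  -- Step 2: let the (1,1) corner vary over the dense set of units of `A`.
  intro P
  have hgmaps : Set.MapsTo (fun x : A => Matrix.fromBlocks (Matrix.of fun _ _ => x)
      P.toBlocks₁₂ P.toBlocks₂₁ P.toBlocks₂₂) {a : A | IsUnit a} (closure T) := by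
    intro x hx
    obtain ⟨⟨x, x', hxx', hx'x⟩, rfl⟩ := hx
    simp only [Units.val_mk]
    refine key _ ⟨⟨Matrix.of fun _ _ => x, Matrix.of fun _ _ => x', ?_, ?_⟩, rfl⟩ _ _ _
    · ext i j; fin_cases i; fin_cases j; simp [Matrix.mul_apply, hxx']
    · ext i j; fin_cases i; fin_cases j; simp [Matrix.mul_apply, hx'x]
  have hgcont : Continuous (fun x : A => Matrix.fromBlocks (Matrix.of fun _ _ => x)
      P.toBlocks₁₂ P.toBlocks₂₁ P.toBlocks₂₂) := by
    apply continuous_matrix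
    rintro (i | i) (j | j)
    · simpa only [Matrix.fromBlocks_apply₁₁, Matrix.of_apply] using continuous_id'
    · exact continuous_const
    · exact continuous_const
    · exact continuous_const
  have h3 := hgmaps.closure hgcont
  rw [closure_closure, h.closure_eq] at h3
  have h4 := h3 (Set.mem_univ (P (Sum.inl 0) (Sum.inl 0)))
  have heq : Matrix.fromBlocks (Matrix.of fun _ _ => P (Sum.inl 0) (Sum.inl 0))
      P.toBlocks₁₂ P.toBlocks₂₁ P.toBlocks₂₂ = P := by
    ext i j
    rcases i with i | i <;> rcases j with j | j
    · obtain rfl : i = 0 := Subsingleton.elim _ _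
      obtain rfl : j = 0 := Subsingleton.elim _ _
      simp
    · simp [Matrix.toBlocks₁₂]
    · simp [Matrix.toBlocks₂₁]
    · simp [Matrix.toBlocks₂₂]
  exact heq ▸ h4

/-- Transport density of units along a reindexing of the matrix algebra. -/
lemma my_dense_transport {A : Type*} [NormedRing A] {m m' : Type*} [Fintype m] [DecidableEq m]
    [Fintype m'] [DecidableEq m'] (e : m ≃ m')
    (hm : Dense {M : Matrix m m A | IsUnit M}) :
    Dense {M : Matrix m' m' A | IsUnit M} := by
  intro P
  have hcont : Continuous fun M : Matrix m m A => (Matrix.reindexAlgEquiv ℕ A e) M := by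
    apply continuous_matrix
    intro i j
    simp only [Matrix.reindexAlgEquiv_apply, Matrix.reindex_apply, Matrix.submatrix_apply]
    exact continuous_apply_apply _ _
  have hmaps : Set.MapsTo (fun M : Matrix m m A => (Matrix.reindexAlgEquiv ℕ A e) M)
      {M : Matrix m m A | IsUnit M} {M : Matrix m' m' A | IsUnit M} :=
    fun M hM => hM.map (Matrix.reindexAlgEquiv ℕ A e)
  have h3 := hmaps.closure hcont
  rw [hm.closure_eq] at h3
  have h4 := h3 (Set.mem_univ ((Matrix.reindexAlgEquiv ℕ A e).symm P))
  simpa using h4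

/-- If a unital complex Banach algebra `A` has dense invertible group, then so does the
algebra of `n × n` matrices over `A` (with the topology of entrywise convergence). -/
theorem matrix_dense_invertibles
    (A : Type*) [NormedRing A] [NormedAlgebra ℂ A] [CompleteSpace A]
    (h : Dense {a : A | IsUnit a}) (n : ℕ) (hn : 0 < n) :
    Dense {M : Matrix (Fin n) (Fin n) A | IsUnit M} := by
  clear hn
  induction n with
  | zero =>
    have huniv : {M : Matrix (Fin 0) (Fin 0) A | IsUnit M} = Set.univ := by
      ext M
      simp only [Set.mem_setOf_eq, Set.mem_univ, iff_true]
      have : M = 1 := by ext i j; exact i.elim0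
      rw [this]; exact isUnit_one
    rw [huniv]; exact dense_univ
  | succ k ih =>
    exact my_dense_transport (finSumFinEquiv.trans (finCongr (Nat.add_comm 1 k)))
      (my_dense_step h ih)
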